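/- arXiv:1512.01491 — 3 statements merged into one kernel-verified Lean document; each statement's English description precedes it below -/
import Mathlib

section
/- Let q ≥ 2 be a natural number and let x : Fin q → Fin q → ℝ be a doubly-indexed family of real numbers. Then (q−1)·∑_{a,b} (x a b)² = ∑_{a<b} (x a a − x b b)² + ∑_{a<b} (x a b + x b a)² + (q−2)·∑_{a≠b} (x a b)² + 2·∑_{a<b} (x a a · x b b − x a b · x b a), where all sums run over indices in Fin q and ∑_{a<b} denotes the sum over pairs with a < b. -/
open Finset

private lemma pair_half {q : ℕ} (f : Fin q → Fin q → ℝ)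
    (hsym : ∀ a b, f a b = f b a) :
    (∑ a : Fin q, ∑ b : Fin q, if a < b then f a b else 0) * 2 =
      (∑ a : Fin q, ∑ b : Fin q, f a b) - ∑ a : Fin q, f a a := by
  have h1 : ∑ a : Fin q, f a a
      = ∑ a : Fin q, ∑ b : Fin q, if a = b then f a b else 0 := by
    refine Finset.sum_congr rfl fun a _ => ?_
    rw [Finset.sum_ite_eq (Finset.univ : Finset (Fin q)) a (fun b => f a b)]
    simp
  have h2 : ∑ a : Fin q, ∑ b : Fin q, f a b
      = (∑ a : Fin q, ∑ b : Fin q, if a < b then f a b else 0)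
        + (∑ a : Fin q, ∑ b : Fin q, if b < a then f a b else 0)
        + (∑ a : Fin q, ∑ b : Fin q, if a = b then f a b else 0) := by
    rw [← Finset.sum_add_distrib, ← Finset.sum_add_distrib]
    refine Finset.sum_congr rfl fun a _ => ?_
    rw [← Finset.sum_add_distrib, ← Finset.sum_add_distrib]
    refine Finset.sum_congr rfl fun b _ => ?_
    rcases lt_trichotomy a b with h | h | h
    · simp [h, h.ne, h.not_gt, asymm h]
    · simp [h, lt_irrefl]
    · simp [h, h.ne', h.not_gt, asymm h]
  have h3 : (∑ a : Fin q, ∑ b : Fin q, if b < a then f a b else 0)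
      = (∑ a : Fin q, ∑ b : Fin q, if a < b then f a b else 0) := by
    rw [Finset.sum_comm]
    refine Finset.sum_congr rfl fun a _ => Finset.sum_congr rfl fun b _ => ?_
    rw [hsym]
  rw [h2, h3, ← h1]
  ring

theorem stmt_0 (q : ℕ) (hq : 2 ≤ q) (x : Fin q → Fin q → ℝ) :
    ((q : ℝ) - 1) * ∑ a : Fin q, ∑ b : Fin q, (x a b) ^ 2 =
      (∑ a : Fin q, ∑ b : Fin q, if a < b then (x a a - x b b) ^ 2 else 0)
        + (∑ a : Fin q, ∑ b : Fin q, if a < b then (x a b + x b a) ^ 2 else 0)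
        + ((q : ℝ) - 2) * (∑ a : Fin q, ∑ b : Fin q, if a ≠ b then (x a b) ^ 2 else 0)
        + 2 * (∑ a : Fin q, ∑ b : Fin q,
            if a < b then x a a * x b b - x a b * x b a else 0) := by
  set A : ℝ := ∑ a : Fin q, ∑ b : Fin q, (x a b) ^ 2 with hA
  set D : ℝ := ∑ a : Fin q, (x a a) ^ 2 with hD
  set T : ℝ := ∑ a : Fin q, x a a with hT
  set P : ℝ := ∑ a : Fin q, ∑ b : Fin q, x a b * x b a with hP
  -- S1
  have e1 : (∑ a : Fin q, ∑ b : Fin q, if a < b then (x a a - x b b) ^ 2 else 0) * 2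
      = 2 * (q : ℝ) * D - 2 * T ^ 2 := by
    rw [pair_half (fun a b => (x a a - x b b) ^ 2) (fun a b => by ring)]
    have : (∑ a : Fin q, ∑ b : Fin q, (x a a - x b b) ^ 2)
        = ∑ a : Fin q, ((q : ℝ) * (x a a) ^ 2 - 2 * x a a * T + D) := by
      refine Finset.sum_congr rfl fun a _ => ?_
      simp only [sub_sq]
      rw [Finset.sum_add_distrib, Finset.sum_sub_distrib, Finset.sum_const,
        card_univ, Fintype.card_fin, ← Finset.mul_sum, ← hT, ← hD,
        nsmul_eq_mul]
    rw [this, Finset.sum_add_distrib, Finset.sum_sub_distrib, ← Finset.mul_sum,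
      Finset.sum_const, card_univ, Fintype.card_fin, ← hD]
    have hsT : ∑ a : Fin q, 2 * x a a * T = 2 * T ^ 2 := by
      rw [← Finset.sum_mul, ← Finset.mul_sum, ← hT]; ring
    rw [hsT, nsmul_eq_mul]
    simp
    ring
  -- S2
  have e2 : (∑ a : Fin q, ∑ b : Fin q, if a < b then (x a b + x b a) ^ 2 else 0) * 2
      = 2 * A + 2 * P - 4 * D := by
    rw [pair_half (fun a b => (x a b + x b a) ^ 2) (fun a b => by ring)]
    have hfull : (∑ a : Fin q, ∑ b : Fin q, (x a b + x b a) ^ 2)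
        = 2 * A + 2 * P := by
      have : ∀ a b : Fin q, (x a b + x b a) ^ 2
          = (x a b) ^ 2 + (x b a) ^ 2 + 2 * (x a b * x b a) := fun a b => by ring
      simp only [this]
      rw [show (∑ a : Fin q, ∑ b : Fin q,
          ((x a b) ^ 2 + (x b a) ^ 2 + 2 * (x a b * x b a)))
        = (∑ a : Fin q, ∑ b : Fin q, (x a b) ^ 2)
          + (∑ a : Fin q, ∑ b : Fin q, (x b a) ^ 2)
          + 2 * (∑ a : Fin q, ∑ b : Fin q, x a b * x b a) by
        rw [Finset.mul_sum]
        simp only [Finset.mul_sum, ← Finset.sum_add_distrib]]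
      rw [Finset.sum_comm (f := fun a b => (x b a) ^ 2), ← hA, ← hP]
      ring
    have hdiag : (∑ a : Fin q, (x a a + x a a) ^ 2) = 4 * D := by
      rw [hD, Finset.mul_sum]
      exact Finset.sum_congr rfl fun a _ => by ring
    rw [hfull, hdiag]
  -- S3
  have e3 : (∑ a : Fin q, ∑ b : Fin q, if a ≠ b then (x a b) ^ 2 else 0)
      = A - D := by
    have : ∀ a b : Fin q, (if a ≠ b then (x a b) ^ 2 else 0)
        = (x a b) ^ 2 - (if a = b then (x a b) ^ 2 else 0) := by
      intro a b; by_cases h : a = b <;> simp [h]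
    simp only [this]
    rw [show (∑ a : Fin q, ∑ b : Fin q,
        ((x a b) ^ 2 - if a = b then (x a b) ^ 2 else 0))
      = A - (∑ a : Fin q, ∑ b : Fin q, if a = b then (x a b) ^ 2 else 0) by
      rw [hA]; simp only [← Finset.sum_sub_distrib]]
    congr 1
    rw [hD]
    refine Finset.sum_congr rfl fun a _ => ?_
    rw [Finset.sum_ite_eq (Finset.univ : Finset (Fin q)) a (fun b => (x a b) ^ 2)]
    simp
  -- S4
  have e4 : (∑ a : Fin q, ∑ b : Fin q,
        if a < b then x a a * x b b - x a b * x b a else 0) * 2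
      = T ^ 2 - P := by
    rw [pair_half (fun a b => x a a * x b b - x a b * x b a) (fun a b => by ring)]
    have hdiag : (∑ a : Fin q, (x a a * x a a - x a a * x a a)) = 0 := by simp
    have hfull : (∑ a : Fin q, ∑ b : Fin q, (x a a * x b b - x a b * x b a))
        = T ^ 2 - P := by
      rw [show (∑ a : Fin q, ∑ b : Fin q, (x a a * x b b - x a b * x b a))
          = (∑ a : Fin q, ∑ b : Fin q, x a a * x b b)
            - (∑ a : Fin q, ∑ b : Fin q, x a b * x b a) by
        simp only [← Finset.sum_sub_distrib]]
      rw [← hP]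
      congr 1
      rw [sq, hT, Finset.sum_mul]
      refine Finset.sum_congr rfl fun a _ => ?_
      rw [Finset.mul_sum]
    rw [hfull, hdiag, sub_zero]
  linear_combination -(e1 / 2) - e2 / 2 - ((q : ℝ) - 2) * e3 - e4
end

section
/- Let q ≥ 2 be a natural number and let x : Fin q → Fin q → ℝ. Then ∑_{a,b} (x a b)² ≥ (2/(q−1)) · ∑_{a<b} (x a a · x b b − x a b · x b a), where the sums run over Fin q and ∑_{a<b} is over pairs with a < b. -/
open Finset

theorem stmt_1 (q : ℕ) (hq : 2 ≤ q) (x : Fin q → Fin q → ℝ) :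
    ∑ a : Fin q, ∑ b : Fin q, (x a b) ^ 2 ≥
      (2 / ((q : ℝ) - 1)) *
        ∑ a : Fin q, ∑ b : Fin q, if a < b then x a a * x b b - x a b * x b a else 0 := by
  have hq2 : (2:ℝ) ≤ (q:ℝ) := by exact_mod_cast hq
  have hq0 : (0:ℝ) < (q:ℝ) - 1 := by linarith
  set S := ∑ a : Fin q, ∑ b : Fin q, (x a b) ^ 2 with hS
  set P := ∑ a : Fin q, ∑ b : Fin q,
      (if a < b then x a a * x b b - x a b * x b a else 0) with hP
  set D := ∑ a : Fin q, (x a a) ^ 2 with hD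
  set C := ∑ a : Fin q, ∑ b : Fin q, x a b * x b a with hC
  -- D ≤ S
  have hDS : D ≤ S := by
    apply Finset.sum_le_sum
    intro a _
    exact Finset.single_le_sum (fun b _ => sq_nonneg (x a b)) (Finset.mem_univ a)
  -- 2*P = (∑ diag)^2 - C
  have hswap : P = ∑ a : Fin q, ∑ b : Fin q,
      (if b < a then x a a * x b b - x a b * x b a else 0) := by
    rw [hP, Finset.sum_comm]
    apply Finset.sum_congr rfl
    intro b _
    apply Finset.sum_congr rfl
    intro a _
    split_ifs with h
    · ring
    · rfl
  have h2P : 2 * P = (∑ a : Fin q, x a a) ^ 2 - C := by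
    have hfull : P + P = ∑ a : Fin q, ∑ b : Fin q, (x a a * x b b - x a b * x b a) := by
      nth_rewrite 2 [hswap]
      rw [hP, ← Finset.sum_add_distrib]
      apply Finset.sum_congr rfl
      intro a _
      rw [← Finset.sum_add_distrib]
      apply Finset.sum_congr rfl
      intro b _
      rcases lt_trichotomy a b with h | h | h
      · simp [h, asymm h]
      · subst h; simp
      · simp [h, asymm h]
    have hsq : (∑ a : Fin q, x a a) ^ 2 = ∑ a : Fin q, ∑ b : Fin q, x a a * x b b := by
      rw [sq, Finset.sum_mul_sum]
    rw [two_mul, hfull, hsq, hC, ← Finset.sum_sub_distrib]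
    apply Finset.sum_congr rfl
    intro a _
    rw [← Finset.sum_sub_distrib]
  -- Cauchy: (∑ diag)^2 ≤ q * D
  have hcauchy : (∑ a : Fin q, x a a) ^ 2 ≤ (q:ℝ) * D := by
    have := sq_sum_le_card_mul_sum_sq (s := (Finset.univ : Finset (Fin q)))
      (f := fun a => x a a)
    simpa [hD] using this
  -- 2*D ≤ C + S
  have hCS : 4 * D ≤ 2 * C + 2 * S := by
    have hSswap : S = ∑ a : Fin q, ∑ b : Fin q, (x b a) ^ 2 := by
      rw [hS, Finset.sum_comm]
    have hdiag : ∑ a : Fin q, ∑ b : Fin q,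
        (if a = b then 4 * (x a a) ^ 2 else 0) = 4 * D := by
      rw [hD, Finset.mul_sum]
      apply Finset.sum_congr rfl
      intro a _
      simp
    calc 4 * D = ∑ a : Fin q, ∑ b : Fin q, (if a = b then 4 * (x a a) ^ 2 else 0) :=
          hdiag.symm
      _ ≤ ∑ a : Fin q, ∑ b : Fin q, (2 * (x a b * x b a) + (x a b) ^ 2 + (x b a) ^ 2) := by
          apply Finset.sum_le_sum
          intro a _
          apply Finset.sum_le_sum
          intro b _
          by_cases h : a = b
          · subst h; simp; nlinarith [sq_nonneg (x a a)]
          · simp [h]; nlinarith [sq_nonneg (x a b + x b a)]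
      _ = 2 * C + S + ∑ a : Fin q, ∑ b : Fin q, (x b a) ^ 2 := by
          rw [hC, hS, Finset.mul_sum]
          rw [← Finset.sum_add_distrib, ← Finset.sum_add_distrib]
          apply Finset.sum_congr rfl
          intro a _
          rw [Finset.mul_sum, ← Finset.sum_add_distrib, ← Finset.sum_add_distrib]
      _ = 2 * C + 2 * S := by rw [← hSswap]; ring
  -- combine: 2*P ≤ (q-1)*S
  have key : 2 * P ≤ ((q:ℝ) - 1) * S := by nlinarith [hDS, hcauchy, hCS, h2P]
  rw [ge_iff_le, div_mul_eq_mul_div, div_le_iff₀ hq0]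
  nlinarith [key]
end

section
/- Let q ≥ 3 be a natural number and let x : Fin q → Fin q → ℝ. Then (q−1)·∑_{a,b} (x a b)² = 2·∑_{a<b} (x a a · x b b − x a b · x b a) holds if and only if x a b = 0 for all a ≠ b and x a a = x b b for all a, b; equivalently, if and only if x is a real scalar multiple of the identity matrix. -/
open Finset

lemma sum_split {q : ℕ} (F : Fin q → Fin q → ℝ) :
    ∑ a : Fin q, ∑ b : Fin q, F a b =
      (∑ a : Fin q, F a a) +
        ∑ a : Fin q, ∑ b : Fin q, (if a < b then F a b + F b a else 0) := by
  have h : ∀ a b : Fin q, F a b =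
      (if a = b then F a b else 0) +
        ((if a < b then F a b else 0) + (if b < a then F a b else 0)) := by
    intro a b
    rcases lt_trichotomy a b with h | h | h
    · simp [h, h.ne, asymm h]
    · subst h; simp
    · simp [h, h.ne', asymm h]
  calc ∑ a : Fin q, ∑ b : Fin q, F a b
      = ∑ a : Fin q, ∑ b : Fin q, ((if a = b then F a b else 0) +
          ((if a < b then F a b else 0) + (if b < a then F a b else 0))) :=
        Finset.sum_congr rfl fun a _ => Finset.sum_congr rfl fun b _ => h a b
    _ = (∑ a : Fin q, ∑ b : Fin q, (if a = b then F a b else 0)) +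
        ((∑ a : Fin q, ∑ b : Fin q, (if a < b then F a b else 0)) +
         (∑ a : Fin q, ∑ b : Fin q, (if b < a then F a b else 0))) := by
        simp [Finset.sum_add_distrib]
    _ = (∑ a : Fin q, F a a) +
        ((∑ a : Fin q, ∑ b : Fin q, (if a < b then F a b else 0)) +
         (∑ a : Fin q, ∑ b : Fin q, (if a < b then F b a else 0))) := by
        rw [Finset.sum_comm (f := fun a b => if b < a then F a b else 0)]
        simp [Finset.sum_ite_eq]
    _ = (∑ a : Fin q, F a a) +
        ∑ a : Fin q, ∑ b : Fin q, (if a < b then F a b + F b a else 0) := by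
        rw [← Finset.sum_add_distrib]
        congr 1
        refine Finset.sum_congr rfl fun a _ => ?_
        rw [← Finset.sum_add_distrib]
        refine Finset.sum_congr rfl fun b _ => ?_
        split_ifs <;> simp

lemma count_lemma {q : ℕ} (g : Fin q → ℝ) :
    ∑ a : Fin q, ∑ b : Fin q, (if a < b then g a + g b else 0) =
      ((q : ℝ) - 1) * ∑ a : Fin q, g a := by
  have h := sum_split (fun a _ => g a)
  simp only [Finset.sum_const, Finset.card_univ, Fintype.card_fin, nsmul_eq_mul] at h
  rw [← Finset.mul_sum] at h
  linarith [h]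

lemma key {q : ℕ} (x : Fin q → Fin q → ℝ) :
    ((q : ℝ) - 1) * (∑ a : Fin q, ∑ b : Fin q, (x a b) ^ 2) -
      2 * ∑ a : Fin q, ∑ b : Fin q,
        (if a < b then x a a * x b b - x a b * x b a else 0) =
      ∑ a : Fin q, ∑ b : Fin q,
        (if a < b then (x a a - x b b) ^ 2 +
          ((q : ℝ) - 2) * ((x a b) ^ 2 + (x b a) ^ 2) + (x a b + x b a) ^ 2 else 0) := by
  have hs := sum_split (fun a b => (x a b) ^ 2)
  have hc := count_lemma (fun a => (x a a) ^ 2)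
  have hd : ∀ a b : Fin q, (if a < b then (x a a - x b b) ^ 2 +
        ((q : ℝ) - 2) * ((x a b) ^ 2 + (x b a) ^ 2) + (x a b + x b a) ^ 2 else 0) =
      ((q : ℝ) - 1) * (if a < b then (x a b) ^ 2 + (x b a) ^ 2 else 0) -
        2 * (if a < b then x a a * x b b - x a b * x b a else 0) +
        (if a < b then (x a a) ^ 2 + (x b b) ^ 2 else 0) := by
    intro a b; split_ifs <;> ring
  calc ((q : ℝ) - 1) * (∑ a : Fin q, ∑ b : Fin q, (x a b) ^ 2) -
      2 * ∑ a : Fin q, ∑ b : Fin q,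
        (if a < b then x a a * x b b - x a b * x b a else 0)
      = ((q : ℝ) - 1) * ((∑ a : Fin q, (x a a) ^ 2) +
          ∑ a : Fin q, ∑ b : Fin q, (if a < b then (x a b) ^ 2 + (x b a) ^ 2 else 0)) -
        2 * ∑ a : Fin q, ∑ b : Fin q,
          (if a < b then x a a * x b b - x a b * x b a else 0) := by rw [← hs]
    _ = (((q : ℝ) - 1) * ∑ a : Fin q, ∑ b : Fin q, (if a < b then (x a b) ^ 2 + (x b a) ^ 2 else 0)) -
        (2 * ∑ a : Fin q, ∑ b : Fin q,
          (if a < b then x a a * x b b - x a b * x b a else 0)) +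
        (∑ a : Fin q, ∑ b : Fin q, (if a < b then (x a a) ^ 2 + (x b b) ^ 2 else 0)) := by
        rw [hc]; ring
    _ = ∑ a : Fin q, ∑ b : Fin q,
        (if a < b then (x a a - x b b) ^ 2 +
          ((q : ℝ) - 2) * ((x a b) ^ 2 + (x b a) ^ 2) + (x a b + x b a) ^ 2 else 0) := by
        simp only [hd, Finset.mul_sum, Finset.sum_add_distrib, Finset.sum_sub_distrib]

theorem stmt_3 (q : ℕ) (hq : 3 ≤ q) (x : Fin q → Fin q → ℝ) :
    ((((q : ℝ) - 1) * ∑ a : Fin q, ∑ b : Fin q, (x a b) ^ 2 =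
        2 * ∑ a : Fin q, ∑ b : Fin q,
          if a < b then x a a * x b b - x a b * x b a else 0) ↔
      ((∀ a b : Fin q, a ≠ b → x a b = 0) ∧ ∀ a b : Fin q, x a a = x b b)) ∧
    (((∀ a b : Fin q, a ≠ b → x a b = 0) ∧ ∀ a b : Fin q, x a a = x b b) ↔
      ∃ c : ℝ, (fun a b => x a b) = c • (1 : Matrix (Fin q) (Fin q) ℝ)) := by
  have hq3 : (3 : ℝ) ≤ (q : ℝ) := by exact_mod_cast hq
  set T : Fin q → Fin q → ℝ := fun a b =>
    (x a a - x b b) ^ 2 + ((q : ℝ) - 2) * ((x a b) ^ 2 + (x b a) ^ 2) + (x a b + x b a) ^ 2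
    with hT
  have hTnonneg : ∀ a b : Fin q, 0 ≤ T a b := by
    intro a b
    have h1 : 0 ≤ ((q : ℝ) - 2) := by linarith
    have := sq_nonneg (x a a - x b b)
    have := sq_nonneg (x a b + x b a)
    have : 0 ≤ ((q : ℝ) - 2) * ((x a b) ^ 2 + (x b a) ^ 2) :=
      mul_nonneg h1 (by positivity)
    simp only [hT]
    positivity
  constructor
  · constructor
    · intro heq
      have h0 : ∑ a : Fin q, ∑ b : Fin q, (if a < b then T a b else 0) = 0 := by
        rw [← key x]; rw [heq]; ring
      have hzero : ∀ a b : Fin q, a < b → T a b = 0 := by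
        have hn2 : ∀ a b : Fin q, 0 ≤ (if a < b then T a b else 0) := by
          intro a b
          split_ifs with h
          · exact hTnonneg a b
          · exact le_refl 0
        have hn : ∀ a ∈ (univ : Finset (Fin q)),
            0 ≤ ∑ b : Fin q, (if a < b then T a b else 0) :=
          fun a _ => Finset.sum_nonneg fun b _ => hn2 a b
        intro a b hab
        have hinner := (Finset.sum_eq_zero_iff_of_nonneg hn).mp h0 a (mem_univ a)
        have hfin := (Finset.sum_eq_zero_iff_of_nonneg
          (fun b _ => hn2 a b)).mp hinner b (mem_univ b)
        rwa [if_pos hab] at hfin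
      -- extract conditions
      have hlt : ∀ a b : Fin q, a < b → x a b = 0 ∧ x b a = 0 ∧ x a a = x b b := by
        intro a b hab
        have h := hzero a b hab
        simp only [hT] at h
        have h1 : (x a a - x b b) ^ 2 = 0 := by nlinarith [sq_nonneg (x a a - x b b), sq_nonneg (x a b + x b a), sq_nonneg (x a b), sq_nonneg (x b a), hq3]
        have h2 : (x a b) ^ 2 = 0 := by nlinarith [sq_nonneg (x a a - x b b), sq_nonneg (x a b + x b a), sq_nonneg (x a b), sq_nonneg (x b a), hq3]
        have h3 : (x b a) ^ 2 = 0 := by nlinarith [sq_nonneg (x a a - x b b), sq_nonneg (x a b + x b a), sq_nonneg (x a b), sq_nonneg (x b a), hq3]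
        refine ⟨pow_eq_zero_iff (by norm_num) |>.mp h2, pow_eq_zero_iff (by norm_num) |>.mp h3, ?_⟩
        have := pow_eq_zero_iff (n := 2) (by norm_num) |>.mp h1
        linarith [sub_eq_zero.mp this]
      constructor
      · intro a b hab
        rcases lt_or_gt_of_ne hab with h | h
        · exact (hlt a b h).1
        · exact (hlt b a h).2.1
      · intro a b
        rcases lt_trichotomy a b with h | h | h
        · exact (hlt a b h).2.2
        · rw [h]
        · exact ((hlt b a h).2.2).symm
    · rintro ⟨hoff, hdiag⟩
      have hz : ∀ a b : Fin q, a < b → T a b = 0 := by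
        intro a b hab
        have h1 := hoff a b hab.ne
        have h2 := hoff b a hab.ne'
        have h3 := hdiag a b
        simp only [hT, h1, h2, h3]
        ring
      have : ∑ a : Fin q, ∑ b : Fin q, (if a < b then T a b else 0) = 0 := by
        refine Finset.sum_eq_zero fun a _ => Finset.sum_eq_zero fun b _ => ?_
        split_ifs with h
        · exact hz a b h
        · rfl
      have hk := key x
      rw [this] at hk
      linarith [hk]
  · constructor
    · rintro ⟨hoff, hdiag⟩
      refine ⟨x ⟨0, by omega⟩ ⟨0, by omega⟩, ?_⟩
      funext a b
      by_cases h : a = b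
      · subst h
        simp [Matrix.smul_apply, Matrix.one_apply, hdiag a ⟨0, by omega⟩]
      · simp [Matrix.smul_apply, Matrix.one_apply, h, hoff a b h]
    · rintro ⟨c, hc⟩
      have hx : ∀ a b : Fin q, x a b = c * (if a = b then 1 else 0) := by
        intro a b
        have := congrFun (congrFun hc a) b
        simpa [Matrix.smul_apply, Matrix.one_apply] using this
      constructor
      · intro a b hab; simp [hx a b, hab]
      · intro a b; simp [hx a a, hx b b]
end
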